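/- Let a < b be real numbers and let X_1, ..., X_n be i.i.d. random variables taking values in [a,b] with common mean μ satisfying l ≤ μ ≤ u, where a ≤ l ≤ u ≤ b. Suppose u ≤ (a+b)/2. Then for every ε ∈ [0, u−l], the empirical mean μ̂_n satisfies P(μ̂_n − μ ≤ −ε) ≤ exp(−n ε² / (2 (u−a)(b−u))). -/

import Mathlib

open MeasureTheory ProbabilityTheory Real


lemma key_scalar (p q s : ℝ) (hp0 : 0 ≤ p) (hpq : p ≤ q) (hq : q ≤ 1/2) (hs : s ≤ 0) :
    1 - p + p * exp s ≤ exp (s * p + s ^ 2 * (q * (1 - q)) / 2) := by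
  set c := q * (1 - q) with hc
  have hp1 : p ≤ 1/2 := hpq.trans hq
  have hD : ∀ x : ℝ, (0:ℝ) < 1 - p + p * exp x := by
    intro x
    nlinarith [exp_pos x]
  set D : ℝ → ℝ := fun x => 1 - p + p * exp x with hDdef
  have hDd : ∀ x, HasDerivAt D (p * exp x) x := by
    intro x
    exact ((Real.hasDerivAt_exp x).const_mul p).const_add (1 - p)
  set f : ℝ → ℝ := fun x => x * p + x ^ 2 * c / 2 - Real.log (D x) with hfdef
  set h : ℝ → ℝ := fun x => p + x * c - p * exp x / D x with hhdef
  have hfd : ∀ x, HasDerivAt f (h x) x := by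
    intro x
    have h1 : HasDerivAt (fun x : ℝ => x * p + x ^ 2 * c / 2) (p + x * c) x := by
      have : HasDerivAt (fun x : ℝ => x * p) p x := by simpa using (hasDerivAt_id x).mul_const p
      have h2 : HasDerivAt (fun x : ℝ => x ^ 2 * c / 2) (x * c) x := by
        have := ((hasDerivAt_pow 2 x).mul_const c).div_const 2
        refine this.congr_deriv ?_
        norm_num
        ring
      exact this.add h2
    have h2 : HasDerivAt (fun x => Real.log (D x)) (p * exp x / D x) x :=
      (hDd x).log (hD x).ne'
    exact h1.sub h2
  have hhd : ∀ x, HasDerivAt h (c - p * exp x * (1 - p) / (D x) ^ 2) x := by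
    intro x
    have h1 : HasDerivAt (fun x : ℝ => p + x * c) c x := by
      simpa using ((hasDerivAt_id x).mul_const c).const_add p
    have h2 : HasDerivAt (fun x => p * exp x / D x)
        ((p * exp x * D x - p * exp x * (p * exp x)) / (D x) ^ 2) x :=
      ((Real.hasDerivAt_exp x).const_mul p).div (hDd x) (hD x).ne'
    have := h1.sub h2
    refine this.congr_deriv ?_
    have := (hD x).ne'
    simp only [hDdef]
    field_simp
    ring
  -- h' ≥ 0 for x ≤ 0
  have hh'nonneg : ∀ x ≤ (0:ℝ), 0 ≤ c - p * exp x * (1 - p) / (D x) ^ 2 := by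
    intro x hx
    have hDx := hD x
    set g := p * exp x / D x with hg
    have hg1 : 1 - g = (1 - p) / D x := by
      rw [hg]
      simp only [hDdef]
      field_simp
      ring
    have hexp1 : exp x ≤ 1 := exp_le_one_iff.mpr hx
    have hgp : g ≤ p := by
      rw [hg, div_le_iff₀ hDx]
      nlinarith [mul_nonneg (mul_nonneg hp0 (sub_nonneg.2 hexp1)) (by linarith : (0:ℝ) ≤ 1 - p)]
    have hg0 : 0 ≤ g := by positivity
    have heq : p * exp x * (1 - p) / (D x) ^ 2 = g * (1 - g) := by
      rw [hg1, hg, div_mul_div_comm, ← sq]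
    rw [heq, hc]
    nlinarith
  -- h is monotone on Iic 0
  have hmono : MonotoneOn h (Set.Iic 0) := by
    apply monotoneOn_of_deriv_nonneg (convex_Iic 0)
    · exact (fun x _ => ((hhd x).continuousAt).continuousWithinAt)
    · intro x hx
      exact (hhd x).differentiableAt.differentiableWithinAt
    · intro x hx
      rw [(hhd x).deriv]
      exact hh'nonneg x (le_of_lt (by simpa using hx))
  have hh0 : h 0 = 0 := by
    simp [hhdef, hDdef]
  have hhle : ∀ x ≤ (0:ℝ), h x ≤ 0 := by
    intro x hx
    have := hmono (Set.mem_Iic.mpr hx) (Set.mem_Iic.mpr le_rfl) hx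
    rwa [hh0] at this
  have hanti : AntitoneOn f (Set.Iic 0) := by
    apply antitoneOn_of_deriv_nonpos (convex_Iic 0)
    · exact (fun x _ => ((hfd x).continuousAt).continuousWithinAt)
    · intro x hx
      exact (hfd x).differentiableAt.differentiableWithinAt
    · intro x hx
      rw [(hfd x).deriv]
      exact hhle x (le_of_lt (by simpa using hx))
  have hf0 : f 0 = 0 := by
    simp [hfdef, hDdef]
  have hfge : 0 ≤ f s := by
    have := hanti (Set.mem_Iic.mpr hs) (Set.mem_Iic.mpr le_rfl) hs
    rwa [hf0] at this
  have hfge' : 0 ≤ s * p + s ^ 2 * c / 2 - Real.log (D s) := by simpa [hfdef] using hfge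
  have : Real.log (D s) ≤ s * p + s ^ 2 * c / 2 := by linarith
  calc D s = exp (Real.log (D s)) := (Real.exp_log (hD s)).symm
    _ ≤ exp (s * p + s ^ 2 * c / 2) := exp_le_exp.mpr this

lemma abs_le_of_Icc {x a b : ℝ} (h1 : a ≤ x) (h2 : x ≤ b) : |x| ≤ |a| + |b| :=
  (abs_le_max_abs_abs h1 h2).trans
    (max_le (le_add_of_nonneg_right (abs_nonneg b)) (le_add_of_nonneg_left (abs_nonneg a)))

lemma integrable_exp_of_bdd {Ω : Type*} [MeasurableSpace Ω] (P : Measure Ω)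
    [IsProbabilityMeasure P] (a b t : ℝ) (Y : Ω → ℝ) (hY : Measurable Y)
    (hbdd : ∀ᵐ ω ∂P, Y ω ∈ Set.Icc a b) :
    Integrable (fun ω => exp (t * Y ω)) P := by
  refine Integrable.mono' (integrable_const (exp (|t| * (|a| + |b|))))
    ((hY.const_mul t).exp.aestronglyMeasurable) ?_
  filter_upwards [hbdd] with ω hω
  rw [Real.norm_eq_abs, abs_of_nonneg (exp_nonneg _)]
  apply exp_le_exp.mpr
  calc t * Y ω ≤ |t * Y ω| := le_abs_self _
    _ = |t| * |Y ω| := abs_mul _ _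
    _ ≤ |t| * (|a| + |b|) :=
        mul_le_mul_of_nonneg_left (abs_le_of_Icc hω.1 hω.2) (abs_nonneg t)

lemma mgf_le_of_bdd {Ω : Type*} [MeasurableSpace Ω] (P : Measure Ω)
    [IsProbabilityMeasure P] (a b u μ : ℝ) (hab : a < b) (haμ : a ≤ μ) (hμu : μ ≤ u)
    (hu : u ≤ (a + b) / 2) (Y : Ω → ℝ) (hY : Measurable Y)
    (hbdd : ∀ᵐ ω ∂P, Y ω ∈ Set.Icc a b) (hmean : ∫ ω, Y ω ∂P = μ)
    (t : ℝ) (ht : t ≤ 0) :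
    mgf Y P t ≤ exp (t * μ + t ^ 2 * ((u - a) * (b - u)) / 2) := by
  have hba : (0:ℝ) < b - a := by linarith
  have hYint : Integrable Y P := by
    refine Integrable.mono' (integrable_const (|a| + |b|)) hY.aestronglyMeasurable ?_
    filter_upwards [hbdd] with ω hω
    rw [Real.norm_eq_abs]
    exact abs_le_of_Icc hω.1 hω.2
  set c1 : ℝ := (b * exp (t * a) - a * exp (t * b)) / (b - a) with hc1
  set c2 : ℝ := (exp (t * b) - exp (t * a)) / (b - a) with hc2
  -- pointwise convexity bound
  have hpt : ∀ᵐ ω ∂P, exp (t * Y ω) ≤ c1 + Y ω * c2 := by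
    filter_upwards [hbdd] with ω hω
    rcases hω with ⟨h1, h2⟩
    set θ : ℝ := (b - Y ω) / (b - a) with hθ
    have hθ0 : 0 ≤ θ := div_nonneg (by linarith) hba.le
    have hθ1 : 0 ≤ 1 - θ := by
      rw [hθ, sub_nonneg, div_le_one hba]
      linarith
    have hcomb : θ * (t * a) + (1 - θ) * (t * b) = t * Y ω := by
      rw [hθ]
      field_simp
      ring
    have hcx := convexOn_exp.2 (Set.mem_univ (t * a)) (Set.mem_univ (t * b)) hθ0 hθ1
      (by ring : θ + (1 - θ) = 1)
    rw [smul_eq_mul, smul_eq_mul, smul_eq_mul, smul_eq_mul, hcomb] at hcx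
    refine hcx.trans (le_of_eq ?_)
    rw [hθ, hc1, hc2]
    field_simp
    ring
  have hint1 : Integrable (fun ω => exp (t * Y ω)) P :=
    integrable_exp_of_bdd P a b t Y hY hbdd
  have hint2 : Integrable (fun ω => c1 + Y ω * c2) P :=
    (integrable_const c1).add (hYint.mul_const c2)
  have hstep1 : mgf Y P t ≤ c1 + μ * c2 := by
    refine (integral_mono_ae hint1 hint2 hpt).trans (le_of_eq ?_)
    rw [integral_add (integrable_const c1) (hYint.mul_const c2), integral_const,
      integral_mul_const, hmean]
    simp
  -- algebra with key_scalar
  set p : ℝ := (μ - a) / (b - a) with hp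
  set q : ℝ := (u - a) / (b - a) with hq
  set s : ℝ := t * (b - a) with hs
  have hp0 : 0 ≤ p := div_nonneg (by linarith) hba.le
  have hpq : p ≤ q := by
    rw [hp, hq, div_le_div_iff₀ hba hba]
    nlinarith
  have hq2 : q ≤ 1/2 := by
    rw [hq, div_le_iff₀ hba]
    linarith
  have hs0 : s ≤ 0 := mul_nonpos_of_nonpos_of_nonneg ht hba.le
  have hkey := key_scalar p q s hp0 hpq hq2 hs0
  have hsplit : exp (t * b) = exp (t * a) * exp s := by
    rw [← Real.exp_add, hs]
    ring_nf
  have heq1 : c1 + μ * c2 = exp (t * a) * (1 - p + p * exp s) := by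
    rw [hc1, hc2, hp, hsplit]
    field_simp
    ring
  have heq2 : t * a + (s * p + s ^ 2 * (q * (1 - q)) / 2)
      = t * μ + t ^ 2 * ((u - a) * (b - u)) / 2 := by
    rw [hs, hp, hq]
    field_simp
    ring
  calc mgf Y P t ≤ c1 + μ * c2 := hstep1
    _ = exp (t * a) * (1 - p + p * exp s) := heq1
    _ ≤ exp (t * a) * exp (s * p + s ^ 2 * (q * (1 - q)) / 2) :=
        mul_le_mul_of_nonneg_left hkey (exp_nonneg _)
    _ = exp (t * a + (s * p + s ^ 2 * (q * (1 - q)) / 2)) := (Real.exp_add _ _).symm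
    _ = exp (t * μ + t ^ 2 * ((u - a) * (b - u)) / 2) := by rw [heq2]

/-- Improved Chernoff-Hoeffding lower-tail bound when `u ≤ (a+b)/2`. -/
theorem lower_tail_bound_low_upper_bound
    {Ω : Type*} [MeasurableSpace Ω] (P : Measure Ω) [IsProbabilityMeasure P]
    (a b l u μ : ℝ) (hab : a < b) (hal : a ≤ l) (hlu : l ≤ u) (hub : u ≤ b)
    (hu : u ≤ (a + b) / 2)
    (n : ℕ) (hn : 0 < n) (X : Fin n → Ω → ℝ)
    (hmeas : ∀ i, Measurable (X i))
    (hindep : ProbabilityTheory.iIndepFun X P)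
    (hident : ∀ i j, ProbabilityTheory.IdentDistrib (X i) (X j) P P)
    (hbdd : ∀ i, ∀ᵐ ω ∂P, X i ω ∈ Set.Icc a b)
    (hmean : ∀ i, ∫ ω, X i ω ∂P = μ)
    (hlμ : l ≤ μ) (hμu : μ ≤ u)
    (ε : ℝ) (hε : ε ∈ Set.Icc 0 (u - l)) :
    (P {ω | (∑ i, X i ω) / n - μ ≤ -ε}).toReal ≤
      Real.exp (-((n : ℝ) * ε ^ 2) / (2 * (u - a) * (b - u))) := by
  obtain ⟨hε0, hεul⟩ := hε
  have hP1 : ∀ s : Set Ω, (P s).toReal ≤ 1 := fun s => by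
    rw [show (1:ℝ) = (P Set.univ).toReal by simp]
    exact ENNReal.toReal_mono (measure_ne_top _ _) (measure_mono (Set.subset_univ _))
  rcases eq_or_lt_of_le hε0 with hε0' | hεpos
  · rw [← hε0']
    norm_num
    exact hP1 _
  -- main case
  have hua : 0 < u - a := by linarith
  have hbu : 0 < b - u := by
    have : a < b := hab
    nlinarith [hu]
  set v : ℝ := (u - a) * (b - u) with hv
  have hv0 : 0 < v := mul_pos hua hbu
  set t : ℝ := -ε / v with htdef
  have ht : t ≤ 0 := by
    rw [htdef]
    apply div_nonpos_of_nonpos_of_nonneg <;> linarith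
  have hn' : (0:ℝ) < n := Nat.cast_pos.mpr hn
  have hset : {ω | (∑ i, X i ω) / n - μ ≤ -ε} = {ω | (∑ i, X i) ω ≤ (n:ℝ) * (μ - ε)} := by
    ext ω
    simp only [Set.mem_setOf_eq, Finset.sum_apply]
    rw [sub_le_iff_le_add, div_le_iff₀ hn']
    constructor <;> intro h <;> nlinarith
  have hint : ∀ i ∈ Finset.univ, Integrable (fun ω => Real.exp (t * X i ω)) P :=
    fun i _ => integrable_exp_of_bdd P a b t (X i) (hmeas i) (hbdd i)
  have hsumint : Integrable (fun ω => Real.exp (t * (∑ i, X i) ω)) P :=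
    hindep.integrable_exp_mul_sum hmeas hint
  have hchern := measure_le_le_exp_mul_mgf ((n:ℝ) * (μ - ε)) ht hsumint
  have haμ : a ≤ μ := hal.trans hlμ
  have hmgf : ∀ i, mgf (X i) P t ≤ Real.exp (t * μ + t ^ 2 * v / 2) := fun i =>
    mgf_le_of_bdd P a b u μ hab haμ hμu hu (X i) (hmeas i) (hbdd i) (hmean i) t ht
  have hprod : mgf (∑ i, X i) P t ≤ (Real.exp (t * μ + t ^ 2 * v / 2)) ^ n := by
    rw [hindep.mgf_sum hmeas]
    calc ∏ i, mgf (X i) P t ≤ ∏ _i : Fin n, Real.exp (t * μ + t ^ 2 * v / 2) :=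
          Finset.prod_le_prod (fun i _ => mgf_nonneg) (fun i _ => hmgf i)
      _ = (Real.exp (t * μ + t ^ 2 * v / 2)) ^ n := by
          rw [Finset.prod_const, Finset.card_univ, Fintype.card_fin]
  have hfinal : Real.exp (-t * ((n:ℝ) * (μ - ε))) * (Real.exp (t * μ + t ^ 2 * v / 2)) ^ n
      = Real.exp (-((n : ℝ) * ε ^ 2) / (2 * (u - a) * (b - u))) := by
    rw [← Real.exp_nat_mul, ← Real.exp_add]
    congr 1
    rw [htdef, hv]
    field_simp
    ring
  calc (P {ω | (∑ i, X i ω) / n - μ ≤ -ε}).toReal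
      = (P {ω | (∑ i, X i) ω ≤ (n:ℝ) * (μ - ε)}).toReal := by rw [hset]
    _ ≤ Real.exp (-t * ((n:ℝ) * (μ - ε))) * mgf (∑ i, X i) P t := hchern
    _ ≤ Real.exp (-t * ((n:ℝ) * (μ - ε))) * (Real.exp (t * μ + t ^ 2 * v / 2)) ^ n :=
        mul_le_mul_of_nonneg_left hprod (Real.exp_nonneg _)
    _ = Real.exp (-((n : ℝ) * ε ^ 2) / (2 * (u - a) * (b - u))) := hfinal
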